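/- Let k ≥ 1, let M be a constant skew-symmetric real k×k matrix, δ > 0, H : ℝ^k → ℝ twice continuously differentiable, and let z : ℝ × ℝ × ℕ → ℝ^k, (s,r,n) ↦ z_n(s,r), be differentiable in (s,r) with jointly continuous derivatives, such that for all (s,r) and all n the implicit midpoint (centered box) scheme holds: M·(z_{n+1} − z_n) = δ·∇H((z_n + z_{n+1})/2). Then the discrete symplectic form ω_n(s,r) = ⟨ M·∂_s z_n(s,r), ∂_r z_n(s,r) ⟩ is independent of n: ω_{n+1}(s,r) = ω_n(s,r) for all n and all (s,r). -/

import Mathlib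

open Matrix

/-- **The implicit midpoint (centered box) scheme is a symplectic
integrator.**  For a Hamiltonian system `M ż = ∇H(z)` with `M` constant
skew-symmetric, if a two-parameter family of discrete trajectories
`z_n(s,r)` satisfies the implicit midpoint scheme
`M(z_{n+1} − z_n) = δ∇H((z_n + z_{n+1})/2)`, then the discrete symplectic
form `ω_n = ⟨M ∂_s z_n, ∂_r z_n⟩` is independent of `n`. -/
theorem midpoint_scheme_symplectic
    (k : ℕ) (hk : 1 ≤ k)
    (M : Matrix (Fin k) (Fin k) ℝ) (hM : Mᵀ = -M)
    (δ : ℝ) (hδ : 0 < δ)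
    (H : (Fin k → ℝ) → ℝ) (hH : ContDiff ℝ 2 H)
    (z : ℝ × ℝ → ℕ → (Fin k → ℝ))
    (hz : ∀ n, ContDiff ℝ 1 (fun p => z p n))
    (hscheme : ∀ (p : ℝ × ℝ) (n : ℕ),
      M.mulVec (z p (n + 1) - z p n)
        = δ • fun i => fderiv ℝ H ((z p n + z p (n + 1)) / 2) (Pi.single i 1)) :
    ∀ (n : ℕ) (p : ℝ × ℝ),
      (∑ i, M.mulVec (fderiv ℝ (fun q => z q (n + 1)) p (1, 0)) i
          * fderiv ℝ (fun q => z q (n + 1)) p (0, 1) i)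
        = ∑ i, M.mulVec (fderiv ℝ (fun q => z q n) p (1, 0)) i
            * fderiv ℝ (fun q => z q n) p (0, 1) i := by
  intro n p
  -- derivatives of the trajectories
  set D1 := fderiv ℝ (fun q => z q n) p with hD1def
  set D2 := fderiv ℝ (fun q => z q (n + 1)) p with hD2def
  have hD1 : HasFDerivAt (fun q => z q n) D1 p :=
    ((hz n).differentiable one_ne_zero p).hasFDerivAt
  have hD2 : HasFDerivAt (fun q => z q (n + 1)) D2 p :=
    ((hz (n + 1)).differentiable one_ne_zero p).hasFDerivAt
  -- the midpoint map
  set m : ℝ × ℝ → (Fin k → ℝ) := fun q => (z q n + z q (n + 1)) / 2 with hmdef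
  have hmsmul : m = fun q => (2:ℝ)⁻¹ • (z q n + z q (n + 1)) := by
    funext q i
    simp [hmdef, Pi.smul_apply, smul_eq_mul, div_eq_inv_mul]
  have hm : HasFDerivAt m ((2:ℝ)⁻¹ • (D1 + D2)) p := by
    rw [hmsmul]
    exact (hD1.add hD2).const_smul ((2:ℝ)⁻¹)
  -- second derivative of H at the midpoint
  set f'' := fderiv ℝ (fderiv ℝ H) (m p) with hf''def
  have hH1 : ContDiff ℝ 1 (fderiv ℝ H) := hH.fderiv_right (by norm_num)
  have hf'' : HasFDerivAt (fderiv ℝ H) f'' (m p) :=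
    ((hH1.differentiable one_ne_zero) (m p)).hasFDerivAt
  have hsymm : ∀ v w, f'' v w = f'' w v := by
    intro v w
    exact (hH.contDiffAt.isSymmSndFDerivAt (by simp [minSmoothness_of_isRCLikeNormedField])) v w
  have hcomp : HasFDerivAt (fun q => fderiv ℝ H (m q))
      (f''.comp ((2:ℝ)⁻¹ • (D1 + D2))) p := hf''.comp p hm
  -- evaluation map
  set Φ : ((Fin k → ℝ) →L[ℝ] ℝ) →L[ℝ] (Fin k → ℝ) :=
    ContinuousLinearMap.pi (fun i => ContinuousLinearMap.apply ℝ ℝ (Pi.single i 1)) with hΦdef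
  have hΦ : ∀ (T : (Fin k → ℝ) →L[ℝ] ℝ), Φ T = fun i => T (Pi.single i 1) := fun T => rfl
  -- multiplication by M as a CLM
  set L : (Fin k → ℝ) →L[ℝ] (Fin k → ℝ) :=
    LinearMap.toContinuousLinearMap (Matrix.mulVecLin M) with hLdef
  have hL : ∀ x, L x = M.mulVec x := fun x => rfl
  -- differentiate the scheme
  have hF : HasFDerivAt (fun q => M.mulVec (z q (n + 1) - z q n))
      (L.comp (D2 - D1)) p := by
    have := L.hasFDerivAt.comp p (hD2.sub hD1)
    exact this
  have hG : HasFDerivAt (fun q => δ • Φ (fderiv ℝ H (m q)))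
      (δ • (Φ.comp (f''.comp ((2:ℝ)⁻¹ • (D1 + D2))))) p :=
    (Φ.hasFDerivAt.comp p hcomp).const_smul δ
  have hFG : (fun q => M.mulVec (z q (n + 1) - z q n))
      = fun q => δ • Φ (fderiv ℝ H (m q)) := by
    funext q
    rw [hscheme q n, hΦ]
  rw [hFG] at hF
  have hderiv := hF.unique hG
  -- key componentwise identities
  have key : ∀ (v : ℝ × ℝ) (i : Fin k),
      M.mulVec (D2 v) i - M.mulVec (D1 v) i
        = δ * 2⁻¹ * f'' (D1 v + D2 v) (Pi.single i 1) := by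
    intro v i
    have h := congrFun (congrArg (fun (T : (ℝ × ℝ) →L[ℝ] (Fin k → ℝ)) => T v) hderiv) i
    simp only [hL, hΦ, ContinuousLinearMap.comp_apply, ContinuousLinearMap.sub_apply,
      ContinuousLinearMap.smul_apply, ContinuousLinearMap.add_apply, Pi.smul_apply,
      smul_eq_mul, Matrix.mulVec_sub, Pi.sub_apply, _root_.map_smul, map_add] at h
    have hadd : f'' (D1 v + D2 v) (Pi.single i 1)
        = f'' (D1 v) (Pi.single i 1) + f'' (D2 v) (Pi.single i 1) := by
      rw [map_add, ContinuousLinearMap.add_apply]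
    rw [hadd]
    ring_nf
    ring_nf at h
    linarith [h]
  set a := D1 (1, 0) with ha
  set a' := D2 (1, 0) with ha'
  set b := D1 (0, 1) with hb
  set b' := D2 (0, 1) with hb'
  have hsingle : ∀ i : Fin k, (fun j => if i = j then (1:ℝ) else 0) = Pi.single i 1 := by
    intro i; funext j; simp [Pi.single_apply, eq_comm]
  -- evaluation lemma
  have heval : ∀ (T : (Fin k → ℝ) →L[ℝ] ℝ) (v : Fin k → ℝ),
      T v = ∑ i, v i * T (Pi.single i 1) := by
    intro T v
    conv_lhs => rw [pi_eq_sum_univ v]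
    rw [map_sum]
    refine Finset.sum_congr rfl fun i _ => ?_
    rw [hsingle i, _root_.map_smul, smul_eq_mul]
  -- skew symmetry
  have hskew : ∀ (x y : Fin k → ℝ),
      ∑ i, M.mulVec x i * y i = -∑ i, M.mulVec y i * x i := by
    intro x y
    have h1 : M.mulVec x ⬝ᵥ y = y ⬝ᵥ M.mulVec x := dotProduct_comm _ _
    have h2 : y ⬝ᵥ M.mulVec x = Mᵀ.mulVec y ⬝ᵥ x := by
      rw [Matrix.dotProduct_mulVec, Matrix.mulVec_transpose]
    have h3 : Mᵀ.mulVec y = -(M.mulVec y) := by rw [hM, Matrix.neg_mulVec]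
    calc ∑ i, M.mulVec x i * y i = M.mulVec x ⬝ᵥ y := rfl
      _ = (-(M.mulVec y)) ⬝ᵥ x := by rw [h1, h2, h3]
      _ = -(M.mulVec y ⬝ᵥ x) := by rw [neg_dotProduct]
      _ = -∑ i, M.mulVec y i * x i := rfl
  -- the two scheme-derivative identities, summed
  have h1 : ∑ i, (M.mulVec a' i - M.mulVec a i) * (b + b') i
      = δ * 2⁻¹ * f'' (a + a') (b + b') := by
    rw [heval (f'' (a + a')) (b + b'), Finset.mul_sum]
    exact Finset.sum_congr rfl fun i _ => by rw [key (1, 0) i]; ring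
  have h2 : ∑ i, (M.mulVec b' i - M.mulVec b i) * (a + a') i
      = δ * 2⁻¹ * f'' (b + b') (a + a') := by
    rw [heval (f'' (b + b')) (a + a'), Finset.mul_sum]
    exact Finset.sum_congr rfl fun i _ => by rw [key (0, 1) i]; ring
  have h2' : ∑ i, M.mulVec (a + a') i * (b' - b) i
      = -(δ * 2⁻¹ * f'' (b + b') (a + a')) := by
    rw [hskew (a + a') (b' - b), ← h2]
    congr 1
    refine Finset.sum_congr rfl fun i _ => ?_
    rw [Matrix.mulVec_sub, Pi.sub_apply]
  have hexp : (∑ i, (M.mulVec a' i - M.mulVec a i) * (b + b') i)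
      + ∑ i, M.mulVec (a + a') i * (b' - b) i
      = 2 * (∑ i, M.mulVec a' i * b' i) - 2 * ∑ i, M.mulVec a i * b i := by
    rw [← Finset.sum_add_distrib, Finset.mul_sum, Finset.mul_sum, ← Finset.sum_sub_distrib]
    refine Finset.sum_congr rfl fun i _ => ?_
    simp only [Matrix.mulVec_add, Pi.sub_apply, Pi.add_apply]
    ring
  have hzero : (2 * (∑ i, M.mulVec a' i * b' i) - 2 * ∑ i, M.mulVec a i * b i) = 0 := by
    rw [← hexp, h1, h2', hsymm]
    ring
  linarith [hzero]
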